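/- With p = 1/φ², where φ = (1+√5)/2, the probability that the random process A_n(p) produces the Zeckendorf decomposition of a fixed integer m ∈ [0, F_{n+1}) equals φ^{-n} if m ∈ [0, F_n) and φ^{-(n+1)} if m ∈ [F_n, F_{n+1}). -/

import Mathlib

open Finset

noncomputable section

def Fib (n : ℕ) : ℕ := Nat.fib (n + 1)

/-- `included c k` : whether `F_{k+1}` is included in the random Zeckendorf process,
given coins `c` (`c k` is the coin for step `k+1`): a Fibonacci number is included
with probability `p` when the previous one was not included, and is excluded otherwise. -/
def included (c : ℕ → Bool) : ℕ → Bool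
  | 0 => c 0
  | k + 1 => !included c k && c (k + 1)

/-- Extend a finite coin sequence by `false`. -/
def ext (n : ℕ) (c : Fin n → Bool) : ℕ → Bool :=
  fun j => if h : j < n then c ⟨j, h⟩ else false

/-- Probability weight of a finite coin sequence, each coin heads with probability `p`. -/
def wt (p : ℝ) {n : ℕ} (c : Fin n → Bool) : ℝ :=
  ∏ i, if c i then p else 1 - p

open Classical in
/-- Probability of an event depending on the first `n` coins. -/
def finProb (p : ℝ) (n : ℕ) (E : (ℕ → Bool) → Prop) : ℝ :=
  ∑ c : Fin n → Bool, if E (ext n c) then wt p c else 0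

/-- `Prob (F_k ∈ A(p))` for `k ≥ 1`. -/
def probIncl (p : ℝ) (k : ℕ) : ℝ :=
  finProb p k (fun c => included c (k - 1) = true)

/-- Expected value of a function of the first `n` coins. -/
def expVal (p : ℝ) (n : ℕ) (f : (ℕ → Bool) → ℝ) : ℝ :=
  ∑ c : Fin n → Bool, wt p c * f (ext n c)

/-- `W_n` : the number of selected indices among `1,...,n`. -/
def countIn (n : ℕ) (c : ℕ → Bool) : ℕ :=
  ((Icc 1 n).filter (fun j => included c (j - 1) = true)).card

-- auxiliary
def Ssum (n : ℕ) (c : ℕ → Bool) : ℕ :=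
  ∑ j ∈ Finset.Icc 1 n, if included c (j - 1) = true then Fib j else 0

def prevIncl (n : ℕ) (c : ℕ → Bool) : Bool :=
  if n = 0 then false else included c (n - 1)

lemma included_congr {c d : ℕ → Bool} : ∀ {k}, (∀ j ≤ k, c j = d j) → included c k = included d k
  | 0, h => h 0 le_rfl
  | k+1, h => by
      rw [included, included, h (k+1) le_rfl,
        included_congr (fun j hj => h j (hj.trans (Nat.le_succ k)))]

lemma prevIncl_congr {n : ℕ} {c d : ℕ → Bool} (h : ∀ j < n, c j = d j) :
    prevIncl n c = prevIncl n d := by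
  rcases n with _ | n
  · rfl
  · exact included_congr (fun j hj => h j (by omega))

lemma included_eq_prev (c : ℕ → Bool) (n : ℕ) : included c n = (!prevIncl n c && c n) := by
  rcases n with _ | n
  · simp [included, prevIncl]
  · rfl

lemma Ssum_congr {n : ℕ} {c d : ℕ → Bool} (h : ∀ j < n, c j = d j) :
    Ssum n c = Ssum n d := by
  refine Finset.sum_congr rfl fun j hj => ?_
  rw [Finset.mem_Icc] at hj
  rw [included_congr (fun i hi => h i (by omega))]

lemma Ssum_succ (n : ℕ) (c : ℕ → Bool) :
    Ssum (n+1) c = Ssum n c + (if included c n = true then Fib (n+1) else 0) := by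
  rw [Ssum, ← Finset.insert_Icc_right_eq_Icc_add_one (by omega), Finset.sum_insert (by simp)]
  simp [Ssum, Nat.add_comm]

lemma Fib_pos (n : ℕ) : 0 < Fib n := Nat.fib_pos.mpr (by omega)

lemma Fib_add_two (n : ℕ) : Fib (n+2) = Fib (n+1) + Fib n := by
  rw [Fib, Fib, Fib, show n+2+1 = n+1+2 from rfl, Nat.fib_add_two]; omega

lemma Ssum_bounds (c : ℕ → Bool) : ∀ n, Ssum n c < Fib (n+1) ∧
    (prevIncl n c = true → Fib n ≤ Ssum n c) ∧
    (prevIncl n c = false → Ssum n c < Fib n)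
  | 0 => by simp [Ssum, prevIncl, Fib]
  | n+1 => by
      obtain ⟨h1, h2, h3⟩ := Ssum_bounds c n
      have hs := Ssum_succ n c
      have hp : prevIncl (n+1) c = included c n := rfl
      have hie := included_eq_prev c n
      rw [Fib_add_two]
      cases hi : included c n
      · rw [hi] at hs; simp at hs
        refine ⟨by omega, ?_, fun _ => by omega⟩
        rw [hp, hi]; simp
      · rw [hi] at hs; simp at hs
        have hpf : prevIncl n c = false := by
          rw [hie] at hi
          cases hpc : prevIncl n c
          · rfl
          · rw [hpc] at hi; simp at hi
        have h4 := h3 hpf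
        refine ⟨by omega, fun _ => by omega, ?_⟩
        rw [hp, hi]; simp

lemma ext_snoc_lt {n : ℕ} (c : Fin n → Bool) (b : Bool) {j : ℕ} (h : j < n) :
    ext (n+1) (Fin.snoc c b) j = ext n c j := by
  have h' : j < n + 1 := by omega
  unfold _root_.ext
  rw [dif_pos h, dif_pos h']
  exact Fin.snoc_castSucc (α := fun _ => Bool) (p := c) (x := b) (i := ⟨j, h⟩)

lemma ext_snoc_last {n : ℕ} (c : Fin n → Bool) (b : Bool) :
    ext (n+1) (Fin.snoc c b) n = b := by
  unfold _root_.ext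
  rw [dif_pos (by omega : n < n + 1)]
  exact Fin.snoc_last (α := fun _ => Bool) (p := c) (x := b)

lemma Ssum_snoc (n : ℕ) (c : Fin n → Bool) (b : Bool) :
    Ssum (n+1) (ext (n+1) (Fin.snoc c b)) = Ssum n (ext n c) +
      (if (!prevIncl n (ext n c) && b) = true then Fib (n+1) else 0) := by
  rw [Ssum_succ, included_eq_prev,
    Ssum_congr (fun j hj => ext_snoc_lt c b hj),
    prevIncl_congr (fun j hj => ext_snoc_lt c b hj), ext_snoc_last]

open Classical in
lemma finProb_succ (p : ℝ) (n : ℕ) (E : (ℕ → Bool) → Prop) :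
    finProb p (n+1) E = ∑ c : Fin n → Bool,
      ((if E (ext (n+1) (Fin.snoc c true)) then wt p c * p else 0) +
       (if E (ext (n+1) (Fin.snoc c false)) then wt p c * (1-p) else 0)) := by
  rw [finProb, ← Equiv.sum_comp (Fin.snocEquiv (fun _ => Bool)), Fintype.sum_prod_type_right]
  refine Finset.sum_congr rfl fun c _ => ?_
  have hw : ∀ b : Bool, wt p (Fin.snoc c b : Fin (n+1) → Bool) =
      wt p c * (if b then p else 1 - p) := by
    intro b
    rw [wt, Fin.prod_univ_castSucc]
    simp [wt]
  rw [Fintype.sum_bool]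
  have he : ∀ b : Bool, (Fin.snocEquiv fun _ => Bool) (b, c) = Fin.snoc c b := fun b => rfl
  rw [he, he, hw, hw]
  cases Classical.em (E (ext (n+1) (Fin.snoc c true))) <;>
    cases Classical.em (E (ext (n+1) (Fin.snoc c false))) <;>
    simp [*]


lemma gold_inv_eq : (Real.goldenRatio : ℝ)⁻¹ = Real.goldenRatio - 1 := by
  have h0 : (Real.goldenRatio : ℝ) ≠ 0 := Real.goldenRatio_ne_zero
  have h5 : (Real.sqrt 5)^2 = 5 := Real.sq_sqrt (by norm_num)
  field_simp
  linear_combination Real.goldenRatio_sq - (5/4 : ℝ) * h5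

lemma one_sub_q : 1 - ((Real.goldenRatio : ℝ) ^ 2)⁻¹ = (Real.goldenRatio : ℝ)⁻¹ := by
  have h0 : (Real.goldenRatio : ℝ) ≠ 0 := Real.goldenRatio_ne_zero
  rw [gold_inv_eq]
  have h1 : ((Real.goldenRatio : ℝ) ^ 2) ≠ 0 := pow_ne_zero 2 h0
  have h5 : (Real.sqrt 5)^2 = 5 := Real.sq_sqrt (by norm_num)
  field_simp
  linear_combination (1 - Real.goldenRatio) * Real.goldenRatio_sq + (7/8 - 7/8 * Real.sqrt 5) * h5

lemma q_eq : ((Real.goldenRatio : ℝ) ^ 2)⁻¹ = (Real.goldenRatio : ℝ) ^ (-2 : ℤ) := by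
  rw [show ((-2:ℤ)) = -(2:ℕ) from rfl, zpow_neg, zpow_natCast]

lemma key : ∀ n m, m < Fib (n+1) →
    finProb (((Real.goldenRatio : ℝ) ^ 2)⁻¹) n (fun c => Ssum n c = m) =
      if m < Fib n then (Real.goldenRatio : ℝ) ^ (-(n:ℤ)) else (Real.goldenRatio : ℝ) ^ (-(n:ℤ) - 1)
  | 0, m, hm => by
      have h1 : Fib (0+1) = 1 := rfl
      have h0 : Fib 0 = 1 := rfl
      have hm0 : m = 0 := by omega
      subst hm0
      rw [if_pos (by omega)]
      simp [finProb, Ssum, wt]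
  | n+1, m, hm => by
      have ih := key n
      have hmono : Fib n ≤ Fib (n+1) := Nat.fib_le_fib_succ
      have hF2 := Fib_add_two n
      have hm' : m < Fib (n+2) := hm
      have hFpos := Fib_pos n
      have hFpos1 := Fib_pos (n+1)
      have h0 : (Real.goldenRatio : ℝ) ≠ 0 := Real.goldenRatio_ne_zero
      set q : ℝ := ((Real.goldenRatio : ℝ) ^ 2)⁻¹ with hq
      rw [finProb_succ]
      by_cases hA : m < Fib (n+1)
      · rw [if_pos hA]
        by_cases hA1 : m < Fib n
        · -- last coin must be false
          trans ((1-q) * finProb q n fun c => Ssum n c = m)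
          · rw [finProb, Finset.mul_sum]
            refine Finset.sum_congr rfl fun c _ => ?_
            beta_reduce
            obtain ⟨b1, b2, b3⟩ := Ssum_bounds (ext n c) n
            have e1 := Ssum_snoc n c true
            have e2 := Ssum_snoc n c false
            cases hp : prevIncl n (ext n c)
            · rw [hp] at e1 e2; simp at e1 e2
              rw [e1, e2,
                if_neg (show ¬ Ssum n (ext n c) + Fib (n+1) = m by omega)]
              by_cases hc : Ssum n (ext n c) = m
              · rw [if_pos hc, if_pos hc]; ring
              · rw [if_neg hc, if_neg hc]; ring
            · rw [hp] at e1 e2; simp at e1 e2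
              have hS := b2 hp
              rw [e1, e2, if_neg (show ¬ Ssum n (ext n c) = m by omega),
                if_neg (show ¬ Ssum n (ext n c) = m by omega),
                if_neg (show ¬ Ssum n (ext n c) = m by omega)]
              ring
          · rw [ih m (by omega), if_pos hA1, one_sub_q,
              ← zpow_neg_one, ← zpow_add₀ h0]
            congr 1
            push_cast
            ring
        · -- both coin values allowed
          trans (finProb q n fun c => Ssum n c = m)
          · rw [finProb]
            refine Finset.sum_congr rfl fun c _ => ?_
            beta_reduce
            obtain ⟨b1, b2, b3⟩ := Ssum_bounds (ext n c) n
            have e1 := Ssum_snoc n c true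
            have e2 := Ssum_snoc n c false
            cases hp : prevIncl n (ext n c)
            · rw [hp] at e1 e2; simp at e1 e2
              have hS := b3 hp
              rw [e1, e2,
                if_neg (show ¬ Ssum n (ext n c) + Fib (n+1) = m by omega),
                if_neg (show ¬ Ssum n (ext n c) = m by omega),
                if_neg (show ¬ Ssum n (ext n c) = m by omega)]
              ring
            · rw [hp] at e1 e2; simp at e1 e2
              rw [e1, e2]
              by_cases hc : Ssum n (ext n c) = m
              · rw [if_pos hc, if_pos hc, if_pos hc]; ring
              · rw [if_neg hc, if_neg hc, if_neg hc]; ring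
          · rw [ih m (by omega), if_neg hA1]
            congr 1
            push_cast
            ring
      · -- last coin must be true
        rw [if_neg hA]
        trans (q * finProb q n fun c => Ssum n c = m - Fib (n+1))
        · rw [finProb, Finset.mul_sum]
          refine Finset.sum_congr rfl fun c _ => ?_
          beta_reduce
          obtain ⟨b1, b2, b3⟩ := Ssum_bounds (ext n c) n
          have e1 := Ssum_snoc n c true
          have e2 := Ssum_snoc n c false
          cases hp : prevIncl n (ext n c)
          · rw [hp] at e1 e2; simp at e1 e2
            rw [e1, e2, if_neg (show ¬ Ssum n (ext n c) = m by omega)]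
            by_cases hc : Ssum n (ext n c) = m - Fib (n+1)
            · rw [if_pos (show Ssum n (ext n c) + Fib (n+1) = m by omega),
                if_pos hc]
              ring
            · rw [if_neg (show ¬ Ssum n (ext n c) + Fib (n+1) = m by omega),
                if_neg hc]
              ring
          · rw [hp] at e1 e2; simp at e1 e2
            have hS := b2 hp
            rw [e1, e2,
              if_neg (show ¬ Ssum n (ext n c) = m by omega),
              if_neg (show ¬ Ssum n (ext n c) = m by omega),
              if_neg (show ¬ Ssum n (ext n c) = m - Fib (n+1) by omega)]
            ring
        · rw [ih (m - Fib (n+1)) (by omega), if_pos (by omega), hq, q_eq,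
            ← zpow_add₀ h0]
          congr 1
          push_cast
          ring

/-- **Lemma.** With `p = 1/φ²`, the probability that the random process `A_n(p)` produces the
Zeckendorf decomposition of a fixed integer `m ∈ [0, F_{n+1})` equals `φ^{-n}` if
`m ∈ [0, F_n)` and `φ^{-(n+1)}` if `m ∈ [F_n, F_{n+1})`. -/
theorem prob_random_process_eq_m (n m : ℕ) (hm : m < Fib (n + 1)) :
    letI φ : ℝ := (1 + Real.sqrt 5) / 2
    letI p : ℝ := (φ ^ 2)⁻¹
    (m < Fib n →
      finProb p n (fun c => (∑ j ∈ Finset.Icc 1 n,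
          if included c (j - 1) = true then Fib j else 0) = m) = φ ^ (-(n : ℤ))) ∧
    (Fib n ≤ m →
      finProb p n (fun c => (∑ j ∈ Finset.Icc 1 n,
          if included c (j - 1) = true then Fib j else 0) = m) = φ ^ (-((n : ℤ) + 1))) := by
  have h := key n m hm
  simp only [Ssum] at h
  constructor
  · intro h1
    rw [if_pos h1] at h
    exact h
  · intro h1
    rw [if_neg (by omega)] at h
    rw [show (-((n : ℤ) + 1)) = -(n:ℤ) - 1 by ring]
    exact h


end
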